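/- Let I_h ⊂ U_h be the two-sided ideal generated by Pᵢ − Cᵢ(h), i = 1,…,l, where Pᵢ = Sym(pᵢ) are the Casimir images of generators of the invariant polynomials and Cᵢ(h) ∈ ℂ[[h]] with Cᵢ(0) = cᵢ. Then under the projection U_h → U_h/(h) ≅ Pol(𝔤*), the image of I_h is the vanishing ideal I₀ of the regular orbit set {p₁ = c₁, …, p_l = c_l}. -/

import Mathlib

open MvPolynomial

noncomputable section

abbrev Rh := PowerSeries ℂ

/-- The relation generating the ideal L_h ⊂ T_{ℂ[[h]]}(𝔤):
X_i ⊗ X_j − X_j ⊗ X_i − h[X_i, X_j], written in a basis with structure constants c. -/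
def uhRel {n : ℕ} (c : Fin n → Fin n → Fin n → ℂ) :
    FreeAlgebra Rh (Fin n) → FreeAlgebra Rh (Fin n) → Prop :=
  fun a b => ∃ i j : Fin n,
    a = FreeAlgebra.ι Rh i * FreeAlgebra.ι Rh j ∧
    b = FreeAlgebra.ι Rh j * FreeAlgebra.ι Rh i
        + ∑ k, (PowerSeries.X * PowerSeries.C (c i j k)) • FreeAlgebra.ι Rh k

/-- U_h = T_{ℂ[[h]]}(𝔤)/L_h. -/
def Uh {n : ℕ} (c : Fin n → Fin n → Fin n → ℂ) := RingQuot (uhRel c)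

instance {n : ℕ} (c : Fin n → Fin n → Fin n → ℂ) : Ring (Uh c) := by
  unfold Uh; infer_instance

instance {n : ℕ} (c : Fin n → Fin n → Fin n → ℂ) : Algebra Rh (Uh c) := by
  unfold Uh; infer_instance

/-- The generator X_i of U_h. -/
def uhGen {n : ℕ} (c : Fin n → Fin n → Fin n → ℂ) (i : Fin n) : Uh c :=
  RingQuot.mkAlgHom Rh (uhRel c) (FreeAlgebra.ι Rh i)

/-- The ordered (PBW) monomial X₁^{d₁} ⋯ Xₙ^{dₙ} in U_h. -/
def pbwMonomial {n : ℕ} (c : Fin n → Fin n → Fin n → ℂ) (d : Fin n →₀ ℕ) : Uh c :=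
  ((List.finRange n).map fun i => uhGen c i ^ d i).prod

/-- The PBW linear isomorphism candidate Pol(𝔤*)[[h]] → U_h (with Pol(𝔤*)[[h]]
modelled by polynomials with coefficients in ℂ[[h]]), sending an ordered monomial to
the corresponding ordered product of generators. -/
def pbwMap {n : ℕ} (c : Fin n → Fin n → Fin n → ℂ)
    (f : MvPolynomial (Fin n) Rh) : Uh c :=
  ∑ d ∈ f.support, f.coeff d • pbwMonomial c d

/-- Reduction mod h: specializing the coefficients at h = 0. -/
def epsh {n : ℕ} (f : MvPolynomial (Fin n) Rh) : MvPolynomial (Fin n) ℂ :=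
  MvPolynomial.map (PowerSeries.constantCoeff) f

/-- The coefficient of h¹. -/
def coeffOneh {n : ℕ} (f : MvPolynomial (Fin n) Rh) : MvPolynomial (Fin n) ℂ :=
  ∑ d ∈ f.support, MvPolynomial.monomial d (PowerSeries.coeff 1 (f.coeff d))

/-- The Lie–Poisson bracket on Pol(𝔤*) in coordinates. -/
def polPB {n : ℕ} (c : Fin n → Fin n → Fin n → ℂ)
    (p q : MvPolynomial (Fin n) ℂ) : MvPolynomial (Fin n) ℂ :=
  ∑ i, ∑ j, ∑ k, MvPolynomial.C (c i j k) * X k * pderiv i p * pderiv j q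

end

noncomputable section

/-- The symmetrized image in U_h of the monomial with exponents d. -/
def uhSymMonomial {n : ℕ} (c : Fin n → Fin n → Fin n → ℂ) (d : Fin n →₀ ℕ) : Uh c :=
  let lst := (Finsupp.toMultiset d).sort (· ≤ ·)
  PowerSeries.C ((lst.length.factorial : ℂ))⁻¹ •
    ∑ σ : Equiv.Perm (Fin lst.length),
      (List.ofFn fun t : Fin lst.length => uhGen c (lst.get (σ t))).prod

/-- The symmetrization map Sym : Pol(𝔤*) → U_h. -/
def uhSym {n : ℕ} (c : Fin n → Fin n → Fin n → ℂ) (q : MvPolynomial (Fin n) ℂ) :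
    Uh c :=
  ∑ d ∈ q.support, PowerSeries.C (q.coeff d) • uhSymMonomial c d

/-- ℂ[[h]]-algebra structure on Pol(𝔤*) via evaluation of coefficients at h = 0. -/
instance polAlgRh {n : ℕ} : Algebra Rh (MvPolynomial (Fin n) ℂ) :=
  ((MvPolynomial.C : ℂ →+* MvPolynomial (Fin n) ℂ).comp
    (PowerSeries.constantCoeff)).toAlgebra

/-- The projection U_h → U_h/(h) ≅ Pol(𝔤*), sending the generators Xᵢ to the
coordinates xᵢ and h to 0. -/
def uhProj {n : ℕ} (c : Fin n → Fin n → Fin n → ℂ) :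
    Uh c →ₐ[Rh] MvPolynomial (Fin n) ℂ :=
  RingQuot.liftAlgHom Rh
    ⟨FreeAlgebra.lift Rh (fun i => (X i : MvPolynomial (Fin n) ℂ)), by
      rintro x y ⟨i, j, rfl, rfl⟩
      simp [Algebra.smul_def, RingHom.algebraMap_toAlgebra, mul_comm]⟩

end


noncomputable section AuxProof

lemma uhProj_gen {n : ℕ} (c : Fin n → Fin n → Fin n → ℂ) (i : Fin n) :
    uhProj c (uhGen c i) = X i := by
  unfold uhProj uhGen
  erw [RingQuot.liftAlgHom_mkAlgHom_apply]
  simp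

lemma algebraMap_pol {n : ℕ} (r : Rh) :
    algebraMap Rh (MvPolynomial (Fin n) ℂ)  r
      = MvPolynomial.C (PowerSeries.constantCoeff r) := rfl

lemma prod_X_toMultiset {n : ℕ} (d : Fin n →₀ ℕ) :
    ((Finsupp.toMultiset d).map X).prod = (MvPolynomial.monomial d (1 : ℂ)) := by
  rw [Finsupp.toMultiset_map, Finsupp.prod_toMultiset,
    Finsupp.prod_mapDomain_index (fun b => pow_zero b) (fun b m₁ m₂ => pow_add b m₁ m₂),
    MvPolynomial.monomial_eq, map_one, one_mul]

lemma uhProj_symMonomial {n : ℕ} (c : Fin n → Fin n → Fin n → ℂ) (d : Fin n →₀ ℕ) :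
    uhProj c (uhSymMonomial c d) = MvPolynomial.monomial d (1 : ℂ) := by
  unfold uhSymMonomial
  set lst := (Finsupp.toMultiset d).sort (· ≤ ·) with hlst
  have hv : (∏ t : Fin lst.length, (X (lst.get t) : MvPolynomial (Fin n) ℂ))
      = MvPolynomial.monomial d 1 := by
    have h2 : lst.map X = List.ofFn (fun t : Fin lst.length => (X (lst.get t) : MvPolynomial (Fin n) ℂ)) := by
      conv_lhs => rw [← List.ofFn_get lst, List.map_ofFn]
      rfl
    have h3 : ((lst : Multiset (Fin n)).map (fun i => (X i : MvPolynomial (Fin n) ℂ))).prod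
        = MvPolynomial.monomial d (1 : ℂ) := by
      rw [hlst, Multiset.sort_eq]; exact prod_X_toMultiset d
    rw [← List.prod_ofFn, ← h2]
    simpa using h3
  have h1 : ∀ σ : Equiv.Perm (Fin lst.length),
      uhProj c (List.ofFn fun t => uhGen c (lst.get (σ t))).prod
        = MvPolynomial.monomial d 1 := by
    intro σ
    rw [map_list_prod, List.map_ofFn]
    have : (List.ofFn ((uhProj c) ∘ fun t => uhGen c (lst.get (σ t)))).prod
        = ∏ t, (X (lst.get (σ t)) : MvPolynomial (Fin n) ℂ) := by
      rw [List.prod_ofFn]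
      exact Finset.prod_congr rfl fun t _ => uhProj_gen c _
    rw [this, Equiv.prod_comp σ (fun t => (X (lst.get t) : MvPolynomial (Fin n) ℂ)), hv]
  rw [map_smul, map_sum]
  rw [Finset.sum_congr rfl fun σ _ => h1 σ, Finset.sum_const, Finset.card_univ,
    Fintype.card_perm, Algebra.smul_def, algebraMap_pol, PowerSeries.constantCoeff_C]
  rw [nsmul_eq_mul, ← MvPolynomial.C_eq_coe_nat, ← mul_assoc, ← MvPolynomial.C_mul,
    Fintype.card_fin, inv_mul_cancel₀ (Nat.cast_ne_zero.mpr lst.length.factorial_ne_zero),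
    MvPolynomial.C_1, one_mul]

lemma uhProj_sym {n : ℕ} (c : Fin n → Fin n → Fin n → ℂ) (q : MvPolynomial (Fin n) ℂ) :
    uhProj c (uhSym c q) = q := by
  unfold uhSym
  rw [map_sum]
  simp_rw [map_smul, uhProj_symMonomial, Algebra.smul_def, algebraMap_pol,
    PowerSeries.constantCoeff_C, MvPolynomial.C_mul_monomial, mul_one]
  exact q.support_sum_monomial_coeff

lemma uhProj_surj {n : ℕ} (c : Fin n → Fin n → Fin n → ℂ) :
    Function.Surjective (uhProj c) := by
  intro q
  induction q using MvPolynomial.induction_on with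
  | C a =>
      exact ⟨algebraMap Rh (Uh c) (PowerSeries.C a), by
        rw [AlgHom.commutes, algebraMap_pol, PowerSeries.constantCoeff_C]⟩
  | add p q hp hq =>
      obtain ⟨x, rfl⟩ := hp; obtain ⟨y, rfl⟩ := hq; exact ⟨x + y, map_add _ _ _⟩
  | mul_X p i hp =>
      obtain ⟨x, rfl⟩ := hp; exact ⟨x * uhGen c i, by rw [map_mul, uhProj_gen]⟩

def uhPreimage {n : ℕ} (c : Fin n → Fin n → Fin n → ℂ)
    (J : Ideal (MvPolynomial (Fin n) ℂ)) : TwoSidedIdeal (Uh c) :=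
  TwoSidedIdeal.mk' ((uhProj c) ⁻¹' (J : Set (MvPolynomial (Fin n) ℂ)))
    (by simp only [Set.mem_preimage, map_zero]; exact J.zero_mem)
    (fun {x y} hx hy => by
      simp only [Set.mem_preimage, map_add] at *
      exact J.add_mem hx hy)
    (fun {x} hx => by
      simp only [Set.mem_preimage, map_neg] at *
      exact J.neg_mem hx)
    (fun {x y} hy => by
      simp only [Set.mem_preimage, map_mul] at *
      exact Ideal.mul_mem_left _ _ hy)
    (fun {x y} hx => by
      simp only [Set.mem_preimage, map_mul] at *
      exact Ideal.mul_mem_right _ _ hx)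

lemma mem_uhPreimage {n : ℕ} (c : Fin n → Fin n → Fin n → ℂ)
    (J : Ideal (MvPolynomial (Fin n) ℂ)) (x : Uh c) :
    x ∈ uhPreimage c J ↔ uhProj c x ∈ J := by
  rw [uhPreimage, TwoSidedIdeal.mem_mk']
  rfl

end AuxProof

/-- the image in U_h/(h) ≅ Pol(𝔤*) of the two-sided ideal
I_h = (P₁ − C₁(h), …, P_l − C_l(h)), where Pᵢ = Sym(pᵢ) and Cᵢ(0) = cᵢ, is the
vanishing ideal I₀ of the regular orbit set {p₁ = c₁, …, p_l = c_l} (for a regular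
orbit I₀ is the ideal generated by the pᵢ − cᵢ, which we take as given). -/
theorem uh_ideal_reduces_to_vanishing_ideal {L : Type*} [LieRing L] [LieAlgebra ℂ L]
    [Module.Finite ℂ L] {n l : ℕ} (b : Module.Basis (Fin n) ℂ L)
    (c : Fin n → Fin n → Fin n → ℂ)
    (hc : ∀ i j, ⁅b i, b j⁆ = ∑ k, c i j k • b k)
    (p : Fin l → MvPolynomial (Fin n) ℂ) (cc : Fin l → ℂ) (C : Fin l → Rh)
    (hC : ∀ i, PowerSeries.constantCoeff (C i) = cc i)
    (hI₀ : (Ideal.span (Set.range fun i => p i - MvPolynomial.C (cc i)) :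
        Set (MvPolynomial (Fin n) ℂ))
      = {q | ∀ x : Fin n → ℂ, (∀ i, MvPolynomial.eval x (p i) = cc i) →
          MvPolynomial.eval x q = 0}) :
    uhProj c '' (TwoSidedIdeal.span
        (Set.range fun i => uhSym c (p i) - algebraMap Rh (Uh c) (C i)) : Set (Uh c))
      = {q | ∀ x : Fin n → ℂ, (∀ i, MvPolynomial.eval x (p i) = cc i) →
          MvPolynomial.eval x q = 0} := by
  rw [← hI₀]
  set g : Fin l → MvPolynomial (Fin n) ℂ := fun i => p i - MvPolynomial.C (cc i) with hg
  set G : Fin l → Uh c := fun i => uhSym c (p i) - algebraMap Rh (Uh c) (C i) with hGdef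
  have hG : ∀ i, uhProj c (G i) = g i := by
    intro i
    rw [hGdef, map_sub, uhProj_sym, AlgHom.commutes, algebraMap_pol, hC]
  ext q
  constructor
  · rintro ⟨u, hu, rfl⟩
    have hsub : Set.range G ⊆ (uhPreimage c (Ideal.span (Set.range g)) : Set (Uh c)) := by
      rintro _ ⟨i, rfl⟩
      rw [SetLike.mem_coe, mem_uhPreimage, hG]
      exact Ideal.subset_span ⟨i, rfl⟩
    have := TwoSidedIdeal.mem_span_iff.mp hu _ hsub
    rw [mem_uhPreimage] at this
    exact this
  · intro hq
    obtain ⟨a, ha⟩ := Ideal.mem_span_range_iff_exists_fun.mp hq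
    choose A hA using fun i => uhProj_surj c (a i)
    refine ⟨∑ i, A i * G i, ?_, ?_⟩
    · refine sum_mem fun i _ => ?_
      exact TwoSidedIdeal.mul_mem_left _ _ _ (TwoSidedIdeal.subset_span ⟨i, rfl⟩)
    · rw [map_sum]
      simp only [map_mul, hA, hG]
      exact ha
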